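/- If G is a finite d-regular simple graph, then there exists a finite (d+1)-regular simple graph G' such that wd(G') ≤ wd(G) + 1. -/

import Mathlib

open scoped Classical

namespace WeakDegeneracy

variable {V : Type} [Fintype V]

/-- `WRem G S f` means all vertices of `S` can be removed from `G` (restricted to `S`)
by a sequence of legal `Delete` and `DeleteSave` operations, starting from the
value function `f`.  Legality of a step requires the resulting function to be
nonnegative on the remaining vertices. -/
inductive WRem (G : SimpleGraph V) : Finset V → (V → ℤ) → Prop
  | empty (f : V → ℤ) : WRem G ∅ f
  | del {S : Finset V} {f : V → ℤ} (u : V) (hu : u ∈ S)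
      (hleg : ∀ v ∈ S.erase u, 0 ≤ (if G.Adj u v then f v - 1 else f v))
      (h : WRem G (S.erase u) (fun v => if G.Adj u v then f v - 1 else f v)) :
      WRem G S f
  | delSave {S : Finset V} {f : V → ℤ} (u w : V) (hu : u ∈ S) (hw : w ∈ S)
      (hadj : G.Adj u w) (hgt : f w < f u)
      (hleg : ∀ v ∈ S.erase u, 0 ≤ (if G.Adj u v ∧ v ≠ w then f v - 1 else f v))
      (h : WRem G (S.erase u) (fun v => if G.Adj u v ∧ v ≠ w then f v - 1 else f v)) :
      WRem G S f

/-- `G` is weakly `f`-degenerate: all vertices can be removed by legal operations. -/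
def WeaklyFDegenerate (G : SimpleGraph V) (f : V → ℤ) : Prop :=
  WRem G Finset.univ f

/-- `G` is weakly `d`-degenerate: weakly `f`-degenerate for the constant function `d`. -/
def WeaklyDegenerate (G : SimpleGraph V) (d : ℕ) : Prop :=
  WeaklyFDegenerate G (fun _ => (d : ℤ))

/-- The weak degeneracy of `G`: the least `d` such that `G` is weakly `d`-degenerate. -/
noncomputable def weakDeg (G : SimpleGraph V) : ℕ :=
  sInf {d : ℕ | WeaklyDegenerate G d}
lemma WRem_congr_set {G : SimpleGraph V} {S T : Finset V} {f : V → ℤ}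
    (hST : S = T) (h : WRem G S f) : WRem G T f := hST ▸ h

lemma adj_ff (G : SimpleGraph V) (u v : V) :
    (G □ (⊤ : SimpleGraph Bool)).Adj (u, false) (v, false) ↔ G.Adj u v := by
  simp [SimpleGraph.boxProd_adj]

lemma adj_tt (G : SimpleGraph V) (u v : V) :
    (G □ (⊤ : SimpleGraph Bool)).Adj (u, true) (v, true) ↔ G.Adj u v := by
  simp [SimpleGraph.boxProd_adj]

lemma adj_ft (G : SimpleGraph V) (u v : V) :
    (G □ (⊤ : SimpleGraph Bool)).Adj (u, false) (v, true) ↔ u = v := by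
  simp [SimpleGraph.boxProd_adj]

lemma lemA (G : SimpleGraph V) {S : Finset V} {f : V → ℤ} (h : WRem G S f) :
    ∀ F : V × Bool → ℤ, (∀ v ∈ S, F (v, true) = f v) →
      WRem (G □ (⊤ : SimpleGraph Bool)) (S.image (fun v => (v, true))) F := by
  induction h with
  | empty f =>
      intro F _
      simpa using WRem.empty (G := G □ (⊤ : SimpleGraph Bool)) F
  | @del S f u hu hleg h ih =>
      intro F hF
      refine WRem.del (u, true) (Finset.mem_image_of_mem _ hu) ?_ ?_
      · intro x hx
        simp only [Finset.mem_erase, Finset.mem_image, ne_eq, Prod.mk.injEq] at hx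
        obtain ⟨hne, v, hv, rfl, rfl⟩ := hx
        have hvS : v ∈ S.erase u := by
          simp only [Finset.mem_erase]
          exact ⟨fun hc => hne (by simp [hc]), hv⟩
        have hFv : F (v, true) = f v := hF v hv
        by_cases hadj : G.Adj u v
        · rw [if_pos ((adj_tt G u v).mpr hadj), hFv]
          simpa [if_pos hadj] using hleg v hvS
        · rw [if_neg (fun hc => hadj ((adj_tt G u v).mp hc)), hFv]
          simpa [if_neg hadj] using hleg v hvS
      · refine WRem_congr_set ?_ (ih _ ?_)
        · ext ⟨v, b⟩
          simp only [Finset.mem_erase, Finset.mem_image, ne_eq, Prod.mk.injEq]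
          aesop
        · intro v hv
          have hFv : F (v, true) = f v := hF v (Finset.mem_of_mem_erase hv)
          beta_reduce
          by_cases hadj : G.Adj u v
          · rw [if_pos ((adj_tt G u v).mpr hadj), if_pos hadj, hFv]
          · rw [if_neg (fun hc => hadj ((adj_tt G u v).mp hc)), if_neg hadj, hFv]
  | @delSave S f u w hu hw hadjuw hgt hleg h ih =>
      intro F hF
      have hcond : ∀ v : V, (((G □ (⊤ : SimpleGraph Bool)).Adj (u, true) (v, true)) ∧
          (v, true) ≠ (w, true)) ↔ (G.Adj u v ∧ v ≠ w) := by
        intro v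
        rw [adj_tt]
        constructor
        · rintro ⟨h1, h2⟩; exact ⟨h1, fun hc => h2 (by rw [hc])⟩
        · rintro ⟨h1, h2⟩; exact ⟨h1, fun hc => h2 (congrArg Prod.fst hc)⟩
      refine WRem.delSave (u, true) (w, true) (Finset.mem_image_of_mem _ hu)
        (Finset.mem_image_of_mem _ hw) ((adj_tt G u w).mpr hadjuw) ?_ ?_ ?_
      · rw [hF u hu, hF w hw]; exact hgt
      · intro x hx
        simp only [Finset.mem_erase, Finset.mem_image, ne_eq, Prod.mk.injEq] at hx
        obtain ⟨hne, v, hv, rfl, rfl⟩ := hx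
        have hvS : v ∈ S.erase u := by
          simp only [Finset.mem_erase]
          exact ⟨fun hc => hne (by simp [hc]), hv⟩
        have hFv : F (v, true) = f v := hF v hv
        by_cases hc : G.Adj u v ∧ v ≠ w
        · rw [if_pos ((hcond v).mpr hc), hFv]
          simpa [if_pos hc] using hleg v hvS
        · rw [if_neg (fun hx => hc ((hcond v).mp hx)), hFv]
          simpa [if_neg hc] using hleg v hvS
      · refine WRem_congr_set ?_ (ih _ ?_)
        · ext ⟨v, b⟩
          simp only [Finset.mem_erase, Finset.mem_image, ne_eq, Prod.mk.injEq]
          aesop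
        · intro v hv
          have hFv : F (v, true) = f v := hF v (Finset.mem_of_mem_erase hv)
          beta_reduce
          by_cases hc : G.Adj u v ∧ v ≠ w
          · rw [if_pos ((hcond v).mpr hc), if_pos hc, hFv]
          · rw [if_neg (fun hx => hc ((hcond v).mp hx)), if_neg hc, hFv]

set_option maxHeartbeats 1000000 in
lemma lemC (G : SimpleGraph V) (k : ℕ)
    (Hk : WRem G Finset.univ (fun _ => (k : ℤ)))
    {S : Finset V} {f : V → ℤ} (h : WRem G S f) :
    ∀ F : V × Bool → ℤ,
      (∀ v ∈ S, F (v, false) = f v + 1) →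
      (∀ v : V, F (v, true) = if v ∈ S then (k : ℤ) + 1 else (k : ℤ)) →
      WRem (G □ (⊤ : SimpleGraph Bool))
        (S.image (fun v => (v, false)) ∪ Finset.univ.image (fun v => (v, true))) F := by
  induction h with
  | empty f =>
      intro F _ hF2
      have hset : (Finset.univ.image (fun v : V => (v, true)))
          = (∅ : Finset V).image (fun v => (v, false)) ∪
              Finset.univ.image (fun v => (v, true)) := by
        simp
      refine WRem_congr_set hset (lemA G Hk F ?_)
      intro v _
      simpa using hF2 v
  | @del S f u hu hleg h ih =>
      intro F hF1 hF2
      refine WRem.del (u, false)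
        (Finset.mem_union_left _ (Finset.mem_image_of_mem _ hu)) ?_ ?_
      · rintro ⟨v, b⟩ hx
        simp only [Finset.mem_erase, Finset.mem_union, Finset.mem_image, Finset.mem_univ,
          true_and, ne_eq, Prod.mk.injEq] at hx
        obtain ⟨hne, hx⟩ := hx
        rcases hx with ⟨v', hv', rfl, rfl⟩ | ⟨v', rfl, rfl⟩
        · have hvS : v' ∈ S.erase u := by
            simp only [Finset.mem_erase]
            exact ⟨fun hc => hne (by simp [hc]), hv'⟩
          have hFv : F (v', false) = f v' + 1 := hF1 v' hv'
          by_cases hadj : G.Adj u v'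
          · rw [if_pos ((adj_ff G u v').mpr hadj), hFv]
            have := hleg v' hvS; rw [if_pos hadj] at this; linarith
          · rw [if_neg (fun hc => hadj ((adj_ff G u v').mp hc)), hFv]
            have := hleg v' hvS; rw [if_neg hadj] at this; linarith
        · rw [hF2 v']
          split_ifs with h1 h2
          · omega
          · exact absurd (((adj_ft G u v').mp h1) ▸ hu) h2
          · omega
          · omega
      · refine WRem_congr_set ?_ (ih _ ?_ ?_)
        · ext ⟨v, b⟩
          simp only [Finset.mem_erase, Finset.mem_union, Finset.mem_image, Finset.mem_univ,
            true_and, ne_eq, Prod.mk.injEq]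
          aesop
        · intro v hv
          have hFv : F (v, false) = f v + 1 := hF1 v (Finset.mem_of_mem_erase hv)
          beta_reduce
          by_cases hadj : G.Adj u v
          · rw [if_pos ((adj_ff G u v).mpr hadj), if_pos hadj, hFv]; ring
          · rw [if_neg (fun hc => hadj ((adj_ff G u v).mp hc)), if_neg hadj, hFv]
        · intro v
          beta_reduce
          by_cases huv : u = v
          · subst huv
            rw [if_pos ((adj_ft G u u).mpr rfl), hF2 u, if_pos hu,
              if_neg (Finset.notMem_erase u S)]
            ring
          · rw [if_neg (fun hc => huv ((adj_ft G u v).mp hc)), hF2 v]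
            have hmem : v ∈ S.erase u ↔ v ∈ S := by
              rw [Finset.mem_erase]
              exact ⟨fun h => h.2, fun h => ⟨fun hc => huv hc.symm, h⟩⟩
            by_cases hvS : v ∈ S
            · rw [if_pos hvS, if_pos (hmem.mpr hvS)]
            · rw [if_neg hvS, if_neg (fun hc => hvS (hmem.mp hc))]
  | @delSave S f u w hu hw hadjuw hgt hleg h ih =>
      intro F hF1 hF2
      have hcondf : ∀ v : V, (((G □ (⊤ : SimpleGraph Bool)).Adj (u, false) (v, false)) ∧
          (v, false) ≠ (w, false)) ↔ (G.Adj u v ∧ v ≠ w) := by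
        intro v
        rw [adj_ff]
        constructor
        · rintro ⟨h1, h2⟩; exact ⟨h1, fun hc => h2 (by rw [hc])⟩
        · rintro ⟨h1, h2⟩; exact ⟨h1, fun hc => h2 (congrArg Prod.fst hc)⟩
      have hcondt : ∀ v : V, (((G □ (⊤ : SimpleGraph Bool)).Adj (u, false) (v, true)) ∧
          (v, true) ≠ (w, false)) ↔ u = v := by
        intro v
        rw [adj_ft]
        constructor
        · rintro ⟨h1, _⟩; exact h1
        · intro h1; exact ⟨h1, fun hc => Bool.noConfusion (congrArg Prod.snd hc)⟩
      refine WRem.delSave (u, false) (w, false)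
        (Finset.mem_union_left _ (Finset.mem_image_of_mem _ hu))
        (Finset.mem_union_left _ (Finset.mem_image_of_mem _ hw))
        ((adj_ff G u w).mpr hadjuw) ?_ ?_ ?_
      · rw [hF1 u hu, hF1 w hw]; linarith
      · rintro ⟨v, b⟩ hx
        simp only [Finset.mem_erase, Finset.mem_union, Finset.mem_image, Finset.mem_univ,
          true_and, ne_eq, Prod.mk.injEq] at hx
        obtain ⟨hne, hx⟩ := hx
        rcases hx with ⟨v', hv', rfl, rfl⟩ | ⟨v', rfl, rfl⟩
        · have hvS : v' ∈ S.erase u := by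
            simp only [Finset.mem_erase]
            exact ⟨fun hc => hne (by simp [hc]), hv'⟩
          have hFv : F (v', false) = f v' + 1 := hF1 v' hv'
          by_cases hc : G.Adj u v' ∧ v' ≠ w
          · rw [if_pos ((hcondf v').mpr hc), hFv]
            have := hleg v' hvS; rw [if_pos hc] at this; linarith
          · rw [if_neg (fun hx => hc ((hcondf v').mp hx)), hFv]
            have := hleg v' hvS; rw [if_neg hc] at this; linarith
        · rw [hF2 v']
          split_ifs with h1 h2
          · omega
          · exact absurd (((hcondt v').mp h1) ▸ hu) h2
          · omega
          · omega
      · refine WRem_congr_set ?_ (ih _ ?_ ?_)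
        · ext ⟨v, b⟩
          simp only [Finset.mem_erase, Finset.mem_union, Finset.mem_image, Finset.mem_univ,
            true_and, ne_eq, Prod.mk.injEq]
          aesop
        · intro v hv
          have hFv : F (v, false) = f v + 1 := hF1 v (Finset.mem_of_mem_erase hv)
          beta_reduce
          by_cases hc : G.Adj u v ∧ v ≠ w
          · rw [if_pos ((hcondf v).mpr hc), if_pos hc, hFv]; ring
          · rw [if_neg (fun hx => hc ((hcondf v).mp hx)), if_neg hc, hFv]
        · intro v
          beta_reduce
          by_cases huv : u = v
          · subst huv
            rw [if_pos ((hcondt u).mpr rfl), hF2 u, if_pos hu,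
              if_neg (Finset.notMem_erase u S)]
            ring
          · rw [if_neg (fun hc => huv ((hcondt v).mp hc)), hF2 v]
            have hmem : v ∈ S.erase u ↔ v ∈ S := by
              rw [Finset.mem_erase]
              exact ⟨fun h => h.2, fun h => ⟨fun hc => huv hc.symm, h⟩⟩
            by_cases hvS : v ∈ S
            · rw [if_pos hvS, if_pos (hmem.mpr hvS)]
            · rw [if_neg hvS, if_neg (fun hc => hvS (hmem.mp hc))]

lemma lemD (G : SimpleGraph V) : ∀ (n : ℕ) (S : Finset V) (f : V → ℤ), S.card = n →
    (∀ v ∈ S, ((S.filter (G.Adj v)).card : ℤ) ≤ f v) → WRem G S f := by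
  intro n
  induction n with
  | zero =>
      intro S f hc _
      rw [Finset.card_eq_zero] at hc
      subst hc
      exact WRem.empty f
  | succ n ih =>
      intro S f hc hf
      obtain ⟨u, hu⟩ : S.Nonempty := Finset.card_pos.mp (by omega)
      have hkey : ∀ v ∈ S.erase u,
          (((S.erase u).filter (G.Adj v)).card : ℤ) ≤ if G.Adj u v then f v - 1 else f v := by
        intro v hv
        have hv' := Finset.mem_of_mem_erase hv
        have hfe : (S.erase u).filter (G.Adj v) = (S.filter (G.Adj v)).erase u := by
          ext a
          simp only [Finset.mem_filter, Finset.mem_erase]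
          tauto
        by_cases hadj : G.Adj u v
        · rw [if_pos hadj, hfe]
          have humem : u ∈ S.filter (G.Adj v) := Finset.mem_filter.mpr ⟨hu, hadj.symm⟩
          have hce := Finset.card_erase_of_mem humem
          have hpos : 1 ≤ (S.filter (G.Adj v)).card := Finset.card_pos.mpr ⟨u, humem⟩
          have hfv := hf v hv'
          have hcast : (((S.filter (G.Adj v)).erase u).card : ℤ)
              = ((S.filter (G.Adj v)).card : ℤ) - 1 := by
            rw [hce]
            push_cast [Nat.cast_sub hpos]
            ring
          linarith
        · rw [if_neg hadj, hfe]
          have hsub := Finset.card_le_card (Finset.erase_subset u (S.filter (G.Adj v)))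
          have hfv := hf v hv'
          exact le_trans (by exact_mod_cast hsub) hfv
      refine WRem.del u hu ?_ ?_
      · intro v hv
        have := hkey v hv
        have hnn : (0 : ℤ) ≤ (((S.erase u).filter (G.Adj v)).card : ℤ) := by positivity
        linarith
      · refine ih (S.erase u) _ ?_ hkey
        rw [Finset.card_erase_of_mem hu, hc]
        omega

lemma degen_of_regular (G : SimpleGraph V) (d : ℕ) (hreg : G.IsRegularOfDegree d) :
    WeaklyDegenerate G d := by
  apply lemD G (Finset.univ.card) Finset.univ _ rfl
  intro v _
  have hfe : Finset.univ.filter (G.Adj v) = G.neighborFinset v := by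
    ext w; simp [SimpleGraph.mem_neighborFinset]
  rw [hfe]
  have hd : G.degree v = d := hreg v
  rw [SimpleGraph.degree] at hd
  exact_mod_cast hd.le


/-- If `G` is a finite
`(d+1)`-regular simple graph, then there is a finite
`(d+1)`-regular simple graph `G'` with `wd(G') ≤ wd(G) + 1`. -/
theorem exists_succ_regular_weakDeg_le {V : Type} [Fintype V]
    (G : SimpleGraph V) (d : ℕ) (hreg : G.IsRegularOfDegree d) :
    ∃ (W : Type) (_ : Fintype W) (G' : SimpleGraph W),
      G'.IsRegularOfDegree (d + 1) ∧ weakDeg G' ≤ weakDeg G + 1 := by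
  classical
  have hmem : WeaklyDegenerate G d := degen_of_regular G d hreg
  have hne : Set.Nonempty {d : ℕ | WeaklyDegenerate G d} := ⟨d, hmem⟩
  have hk : WeaklyDegenerate G (weakDeg G) := Nat.sInf_mem hne
  refine ⟨V × Bool, inferInstance, G □ (⊤ : SimpleGraph Bool), ?_, ?_⟩
  · intro x
    rw [SimpleGraph.degree_boxProd, hreg x.1]
    have htop : (⊤ : SimpleGraph Bool).IsRegularOfDegree (Fintype.card Bool - 1) :=
      SimpleGraph.IsRegularOfDegree.top
    have h2 := htop x.2
    simp only [Fintype.card_bool] at h2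
    omega
  · apply Nat.sInf_le
    show WeaklyDegenerate (G □ (⊤ : SimpleGraph Bool)) (weakDeg G + 1)
    unfold WeaklyDegenerate WeaklyFDegenerate
    have hset : (Finset.univ.image (fun v : V => (v, false)) ∪
        Finset.univ.image (fun v : V => (v, true)))
          = (Finset.univ : Finset (V × Bool)) := by
      ext ⟨v, b⟩
      cases b <;> simp
    refine WRem_congr_set hset ?_
    apply lemC G (weakDeg G) hk hk
    · intro v _; push_cast; ring
    · intro v
      rw [if_pos (Finset.mem_univ v)]
      push_cast
      ring

end WeakDegeneracy
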